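/- The symbol of the Rapcsák operator P₁ is involutive: the basis e_1, …, e_{2n} of V given by e_j := h_j for 1 ≤ j ≤ n−1, e_n := S + v_1 + ⋯ + v_n, and e_{n+j} := v_j for 1 ≤ j ≤ n, is quasi-regular, i.e. dim g₃(P₁) = dim g₂(P₁) + Σ_{k=1}^{2n} dim g₂(P₁)_{e₁…e_k}, where g₂(P₁) is the space of symmetric bilinear forms A on V with A(X, C) = 0 and A(S, J X) = A(X, C) for all X ∈ V, g₂(P₁)_{e₁…e_k} := { A ∈ g₂(P₁) : A(e_j, X) = 0 for all X ∈ V and all 1 ≤ j ≤ k }, and g₃(P₁) is the space of symmetric trilinear forms A on V with A(X, Y, C) = 0 and A(X, S, J Y) = A(X, Y, C) for all X, Y ∈ V. -/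

import Mathlib

set_option synthInstance.maxHeartbeats 1000000
set_option maxHeartbeats 1000000

noncomputable section

/-- The pointwise model `V = (Fin n → ℝ) × (Fin n → ℝ)` of the double tangent space
`T_x(TM)` for a spray on an `n`-dimensional manifold, in an adapted basis. -/
abbrev V (n : ℕ) : Type := (Fin n → ℝ) × (Fin n → ℝ)

/-- The vertical endomorphism `J (x, y) = (0, x)`. -/
def Jmap (n : ℕ) : V n →ₗ[ℝ] V n where
  toFun p := (0, p.1)
  map_add' a b := by simp
  map_smul' c a := by simp

/-- The horizontal projector `P_h (x, y) = (x, 0)`. -/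
def Ph (n : ℕ) : V n →ₗ[ℝ] V n where
  toFun p := (p.1, 0)
  map_add' a b := by simp
  map_smul' c a := by simp

/-- The `j`-th standard basis vector of `Fin n → ℝ`, indexed by `1 ≤ j ≤ n`
(zero if `j` is out of range). -/
def dlt (n j : ℕ) : Fin n → ℝ := fun i => if (i : ℕ) + 1 = j then 1 else 0

/-- The horizontal basis vector `h_j`, `1 ≤ j ≤ n`. -/
def hvec (n j : ℕ) : V n := (dlt n j, 0)

/-- The vertical basis vector `v_j`, `1 ≤ j ≤ n`. -/
def vvec (n j : ℕ) : V n := (0, dlt n j)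

/-- The spray vector `S = h_n`. -/
def Svec (n : ℕ) : V n := hvec n n

/-- The Liouville vector `C = v_n = J S`. -/
def Cvec (n : ℕ) : V n := vvec n n

/-- Bilinear forms on `V n`. -/
abbrev Bil (n : ℕ) := V n →ₗ[ℝ] V n →ₗ[ℝ] ℝ

/-- Trilinear forms on `V n` (bundled). -/
abbrev Tri (n : ℕ) := V n →ₗ[ℝ] V n →ₗ[ℝ] V n →ₗ[ℝ] ℝ

/-- Trilinearity of a function `A : V × V × V → ℝ`. -/
def IsTrilin (n : ℕ) (A : V n → V n → V n → ℝ) : Prop :=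
  (∀ X X' Y Z, A (X + X') Y Z = A X Y Z + A X' Y Z) ∧
  (∀ (c : ℝ) X Y Z, A (c • X) Y Z = c * A X Y Z) ∧
  (∀ X Y Y' Z, A X (Y + Y') Z = A X Y Z + A X Y' Z) ∧
  (∀ (c : ℝ) X Y Z, A X (c • Y) Z = c * A X Y Z) ∧
  (∀ X Y Z Z', A X Y (Z + Z') = A X Y Z + A X Y Z') ∧
  (∀ (c : ℝ) X Y Z, A X Y (c • Z) = c * A X Y Z)

theorem IsTrilin.add {n : ℕ} {a b : V n → V n → V n → ℝ}
    (ha : IsTrilin n a) (hb : IsTrilin n b) : IsTrilin n (a + b) := by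
  obtain ⟨ha1, ha2, ha3, ha4, ha5, ha6⟩ := ha
  obtain ⟨hb1, hb2, hb3, hb4, hb5, hb6⟩ := hb
  refine ⟨fun X X' Y Z => ?_, fun c X Y Z => ?_, fun X Y Y' Z => ?_,
    fun c X Y Z => ?_, fun X Y Z Z' => ?_, fun c X Y Z => ?_⟩ <;>
      simp only [Pi.add_apply]
  · linear_combination ha1 X X' Y Z + hb1 X X' Y Z
  · linear_combination ha2 c X Y Z + hb2 c X Y Z
  · linear_combination ha3 X Y Y' Z + hb3 X Y Y' Z
  · linear_combination ha4 c X Y Z + hb4 c X Y Z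
  · linear_combination ha5 X Y Z Z' + hb5 X Y Z Z'
  · linear_combination ha6 c X Y Z + hb6 c X Y Z

theorem IsTrilin.smul {n : ℕ} (c : ℝ) {a : V n → V n → V n → ℝ}
    (ha : IsTrilin n a) : IsTrilin n (c • a) := by
  obtain ⟨ha1, ha2, ha3, ha4, ha5, ha6⟩ := ha
  refine ⟨fun X X' Y Z => ?_, fun d X Y Z => ?_, fun X Y Y' Z => ?_,
    fun d X Y Z => ?_, fun X Y Z Z' => ?_, fun d X Y Z => ?_⟩ <;>
      simp only [Pi.smul_apply, smul_eq_mul]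
  · linear_combination c * ha1 X X' Y Z
  · linear_combination c * ha2 d X Y Z
  · linear_combination c * ha3 X Y Y' Z
  · linear_combination c * ha4 d X Y Z
  · linear_combination c * ha5 X Y Z Z'
  · linear_combination c * ha6 d X Y Z

theorem IsTrilin.zero (n : ℕ) : IsTrilin n (0 : V n → V n → V n → ℝ) := by
  refine ⟨fun X X' Y Z => by simp, fun c X Y Z => by simp, fun X Y Y' Z => by simp,
    fun c X Y Z => by simp, fun X Y Z Z' => by simp, fun c X Y Z => by simp⟩

/-- The kernel `g₂(P₁)` of the symbol of the Rapcsák operator: symmetric bilinear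
forms `A` on `V` with `A(X, C) = 0` and `A(S, J X) = A(X, C)` for all `X`. -/
def g2P1 (n : ℕ) : Submodule ℝ (Bil n) where
  carrier := {A | (∀ X Y, A X Y = A Y X) ∧ (∀ X, A X (Cvec n) = 0) ∧
    (∀ X, A (Svec n) (Jmap n X) = A X (Cvec n))}
  add_mem' := by
    rintro a b ⟨ha1, ha2, ha3⟩ ⟨hb1, hb2, hb3⟩
    refine ⟨fun X Y => ?_, fun X => ?_, fun X => ?_⟩ <;>
      simp only [LinearMap.add_apply]
    · linear_combination ha1 X Y + hb1 X Y
    · linear_combination ha2 X + hb2 X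
    · linear_combination ha3 X + hb3 X
  zero_mem' := ⟨fun X Y => by simp, fun X => by simp, fun X => by simp⟩
  smul_mem' := by
    rintro c a ⟨ha1, ha2, ha3⟩
    refine ⟨fun X Y => ?_, fun X => ?_, fun X => ?_⟩ <;>
      simp only [LinearMap.smul_apply, smul_eq_mul]
    · linear_combination c * ha1 X Y
    · linear_combination c * ha2 X
    · linear_combination c * ha3 X

/-- The kernel `g₃(P₁)` of the prolonged symbol of the Rapcsák operator: symmetric
trilinear forms `A` on `V` with `A(X, Y, C) = 0` and `A(X, S, J Y) = A(X, Y, C)`. -/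
def g3P1 (n : ℕ) : Submodule ℝ (V n → V n → V n → ℝ) where
  carrier := {A | IsTrilin n A ∧
    (∀ X Y Z, A X Y Z = A Y X Z) ∧ (∀ X Y Z, A X Y Z = A X Z Y) ∧
    (∀ X Y, A X Y (Cvec n) = 0) ∧
    (∀ X Y, A X (Svec n) (Jmap n Y) = A X Y (Cvec n))}
  add_mem' := by
    rintro a b ⟨haT, ha1, ha2, ha3, ha4⟩ ⟨hbT, hb1, hb2, hb3, hb4⟩
    refine ⟨haT.add hbT, fun X Y Z => ?_, fun X Y Z => ?_, fun X Y => ?_,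
      fun X Y => ?_⟩ <;> simp only [Pi.add_apply]
    · linear_combination ha1 X Y Z + hb1 X Y Z
    · linear_combination ha2 X Y Z + hb2 X Y Z
    · linear_combination ha3 X Y + hb3 X Y
    · linear_combination ha4 X Y + hb4 X Y
  zero_mem' := ⟨IsTrilin.zero n, fun X Y Z => by simp, fun X Y Z => by simp,
    fun X Y => by simp, fun X Y => by simp⟩
  smul_mem' := by
    rintro c a ⟨haT, ha1, ha2, ha3, ha4⟩
    refine ⟨haT.smul c, fun X Y Z => ?_, fun X Y Z => ?_, fun X Y => ?_,
      fun X Y => ?_⟩ <;> simp only [Pi.smul_apply, smul_eq_mul]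
    · linear_combination c * ha1 X Y Z
    · linear_combination c * ha2 X Y Z
    · linear_combination c * ha3 X Y
    · linear_combination c * ha4 X Y

/-- The basis vectors `e_1, …, e_{2n}` (1-indexed): `e_j = h_j` for `j < n`,
`e_n = S + v_1 + ⋯ + v_n`, and `e_{n+j} = v_j`. -/
def evec (n j : ℕ) : V n :=
  if j < n then hvec n j
  else if j = n then Svec n + ∑ i ∈ Finset.Icc 1 n, vvec n i
  else vvec n (j - n)

/-- The subspace `g₂(P₁)_{e₁…e_k}` of `g₂(P₁)` of forms annihilating `e_1, …, e_k`
in the first argument. -/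
def g2P1e (n k : ℕ) : Submodule ℝ (Bil n) where
  carrier := {A | (∀ X Y, A X Y = A Y X) ∧ (∀ X, A X (Cvec n) = 0) ∧
    (∀ X, A (Svec n) (Jmap n X) = A X (Cvec n)) ∧
    (∀ j, 1 ≤ j → j ≤ k → ∀ X, A (evec n j) X = 0)}
  add_mem' := by
    rintro a b ⟨ha1, ha2, ha3, ha4⟩ ⟨hb1, hb2, hb3, hb4⟩
    refine ⟨fun X Y => ?_, fun X => ?_, fun X => ?_, fun j hj1 hj2 X => ?_⟩ <;>
      simp only [LinearMap.add_apply]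
    · linear_combination ha1 X Y + hb1 X Y
    · linear_combination ha2 X + hb2 X
    · linear_combination ha3 X + hb3 X
    · linear_combination ha4 j hj1 hj2 X + hb4 j hj1 hj2 X
  zero_mem' := ⟨fun X Y => by simp, fun X => by simp, fun X => by simp,
    fun j hj1 hj2 X => by simp⟩
  smul_mem' := by
    rintro c a ⟨ha1, ha2, ha3, ha4⟩
    refine ⟨fun X Y => ?_, fun X => ?_, fun X => ?_, fun j hj1 hj2 X => ?_⟩ <;>
      simp only [LinearMap.smul_apply, smul_eq_mul]
    · linear_combination c * ha1 X Y
    · linear_combination c * ha2 X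
    · linear_combination c * ha3 X
    · linear_combination c * ha4 j hj1 hj2 X

namespace SP7

variable {n : ℕ}

/-! ### Basic index and basis vector lemmas -/

def lastI (n : ℕ) [NeZero n] : Fin n := ⟨n - 1, Nat.pred_lt (NeZero.ne n)⟩

@[simp] lemma lastI_val [NeZero n] : ((lastI n : Fin n) : ℕ) = n - 1 := rfl

def hvF (t : Fin n) : V n := hvec n ((t : ℕ) + 1)
def vvF (t : Fin n) : V n := vvec n ((t : ℕ) + 1)

lemma dlt_succ_apply (t s : Fin n) :
    dlt n ((t : ℕ) + 1) s = if s = t then 1 else 0 := by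
  simp only [dlt]
  by_cases h : s = t
  · subst h; simp
  · rw [if_neg h, if_neg]
    simp only [Fin.ext_iff] at h; omega

lemma hvF_fst (t s : Fin n) : (hvF t).1 s = if s = t then 1 else 0 := dlt_succ_apply t s
@[simp] lemma hvF_snd (t : Fin n) : (hvF t).2 = 0 := rfl
lemma vvF_snd (t s : Fin n) : (vvF t).2 s = if s = t then 1 else 0 := dlt_succ_apply t s
@[simp] lemma vvF_fst (t : Fin n) : (vvF t).1 = 0 := rfl

lemma lastI_succ [NeZero n] : ((lastI n : Fin n) : ℕ) + 1 = n := by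
  have := Nat.pos_of_ne_zero (NeZero.ne n); simp [lastI]; omega

lemma dlt_n_apply [NeZero n] (s : Fin n) :
    dlt n n s = if s = lastI n then 1 else 0 := by
  simp only [dlt]
  by_cases h : s = lastI n
  · subst h; rw [if_pos rfl, if_pos]; exact lastI_succ
  · rw [if_neg h, if_neg]
    have h2 := lastI_succ (n := n)
    simp only [Fin.ext_iff, lastI_val] at h ⊢
    omega

lemma Svec_eq [NeZero n] : Svec n = hvF (lastI n) := by
  simp only [Svec, hvF, lastI_succ]

lemma Cvec_eq [NeZero n] : Cvec n = vvF (lastI n) := by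
  simp only [Cvec, vvF, lastI_succ]

@[simp] lemma Jmap_apply (X : V n) : Jmap n X = (0, X.1) := rfl

lemma Jmap_hvF (t : Fin n) : Jmap n (hvF t) = vvF t := rfl

lemma Jmap_vvF (t : Fin n) : Jmap n (vvF t) = 0 := rfl

/-- Expansion of a vector in the adapted basis. -/
lemma expand (X : V n) : X = ∑ t : Fin n, (X.1 t • hvF t + X.2 t • vvF t) := by
  refine Prod.ext ?_ ?_ <;> funext s <;>
    simp only [Prod.fst_sum, Prod.snd_sum, Prod.fst_add, Prod.snd_add, Prod.smul_fst,
      Prod.smul_snd, Finset.sum_apply, Pi.add_apply, Pi.smul_apply, hvF_fst, vvF_snd,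
      hvF_snd, vvF_fst, smul_eq_mul, Pi.zero_apply, mul_zero, mul_ite, mul_one,
      add_zero, zero_add]
  · rw [Finset.sum_ite_eq Finset.univ s X.1]; simp
  · rw [Finset.sum_ite_eq Finset.univ s X.2]; simp

/-! ### Bilinearity and expansion -/

def IsBilin (n : ℕ) (B : V n → V n → ℝ) : Prop :=
  (∀ X X' Y, B (X + X') Y = B X Y + B X' Y) ∧
  (∀ (c : ℝ) X Y, B (c • X) Y = c * B X Y) ∧
  (∀ X Y Y', B X (Y + Y') = B X Y + B X Y') ∧
  (∀ (c : ℝ) X Y, B X (c • Y) = c * B X Y)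

lemma expand_fun {f : V n → ℝ} (hadd : ∀ a b, f (a + b) = f a + f b)
    (hsmul : ∀ (c : ℝ) a, f (c • a) = c * f a) (X : V n) :
    f X = ∑ t : Fin n, X.1 t * f (hvF t) + ∑ t : Fin n, X.2 t * f (vvF t) := by
  have h0 : f 0 = 0 := by simpa using hsmul 0 0
  have hsum : ∀ (s : Finset (Fin n)) (g : Fin n → V n),
      f (∑ i ∈ s, g i) = ∑ i ∈ s, f (g i) := by
    intro s g
    induction s using Finset.cons_induction with
    | empty => simpa
    | cons a s ha ih => rw [Finset.sum_cons, hadd, ih, Finset.sum_cons]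
  conv_lhs => rw [expand X]
  rw [hsum]
  simp only [hadd, hsmul]
  rw [Finset.sum_add_distrib]

lemma vanish_of_basis {f : V n → ℝ} (hadd : ∀ a b, f (a + b) = f a + f b)
    (hsmul : ∀ (c : ℝ) a, f (c • a) = c * f a)
    (hh : ∀ t, f (hvF t) = 0) (hv : ∀ t, f (vvF t) = 0) (X : V n) : f X = 0 := by
  rw [expand_fun hadd hsmul]
  simp [hh, hv]

/-! ### The symmetrization `sym3` -/

def sym3 (ε : V n → ℝ) (e : V n) (B : V n → V n → ℝ) : V n → V n → V n → ℝ :=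
  fun X Y Z =>
    ε X * B Y Z + ε Y * B X Z + ε Z * B X Y
      - ε X * ε Y * B e Z - ε Y * ε Z * B e X - ε X * ε Z * B e Y
      + ε X * ε Y * ε Z * B e e

section sym3
variable {ε : V n → ℝ} {e : V n} {B : V n → V n → ℝ}

lemma sym3_trilin (hadd : ∀ a b, ε (a + b) = ε a + ε b)
    (hsmul : ∀ (c : ℝ) a, ε (c • a) = c * ε a) (hB : IsBilin n B) :
    IsTrilin n (sym3 ε e B) := by
  obtain ⟨hB1, hB2, hB3, hB4⟩ := hB
  refine ⟨fun X X' Y Z => ?_, fun c X Y Z => ?_, fun X Y Y' Z => ?_,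
    fun c X Y Z => ?_, fun X Y Z Z' => ?_, fun c X Y Z => ?_⟩ <;>
    simp only [sym3, hadd, hsmul, hB1, hB2, hB3, hB4] <;> ring

lemma sym3_symm12 (hBs : ∀ X Y, B X Y = B Y X) (X Y Z : V n) :
    sym3 ε e B X Y Z = sym3 ε e B Y X Z := by
  simp only [sym3]
  linear_combination (ε Z) * hBs X Y

lemma sym3_symm23 (hBs : ∀ X Y, B X Y = B Y X) (X Y Z : V n) :
    sym3 ε e B X Y Z = sym3 ε e B X Z Y := by
  simp only [sym3]
  linear_combination (ε X) * hBs Y Z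

lemma sym3_eval (he : ε e = 1) (Y Z : V n) : sym3 ε e B e Y Z = B Y Z := by
  simp only [sym3, he]; ring

/-- `sym3` vanishes in the first slot on a vector annihilated by `ε` and `B`. -/
lemma sym3_ann {x : V n} (hx : ε x = 0) (hBx : ∀ Y, B x Y = 0)
    (hBex : B e x = 0) (Y Z : V n) : sym3 ε e B x Y Z = 0 := by
  simp only [sym3, hx, hBx, hBex]; ring

lemma sym3_zero₃ {z : V n} (hz : ε z = 0) (hBz : ∀ X, B X z = 0) (X Y : V n) :
    sym3 ε e B X Y z = 0 := by
  simp only [sym3, hz, hBz]; ring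

end sym3

/-! ### The correction tensor gadget -/

def rho (S' : Finset (Fin n)) (M : Fin n → Fin n → ℝ) (t : Fin n) : ℝ := ∑ l ∈ S', M t l

def sig (S' : Finset (Fin n)) (M : Fin n → Fin n → ℝ) : ℝ := ∑ t ∈ S', rho S' M t

def gad (S' : Finset (Fin n)) (M : Fin n → Fin n → ℝ) (t u r : Fin n) : ℝ :=
  (1 / (S'.card : ℝ)) * (M t u + M u r + M t r)
    - (1 / (S'.card : ℝ) ^ 2) * (rho S' M t + rho S' M u + rho S' M r)
    + (1 / (S'.card : ℝ) ^ 3) * sig S' M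

section gad
variable {S' : Finset (Fin n)} {M : Fin n → Fin n → ℝ}

lemma gad_symm12 (hM : ∀ a b, M a b = M b a) (t u r : Fin n) :
    gad S' M t u r = gad S' M u t r := by
  simp only [gad]
  linear_combination (1 / (S'.card : ℝ)) * hM t u

lemma gad_symm23 (hM : ∀ a b, M a b = M b a) (t u r : Fin n) :
    gad S' M t u r = gad S' M t r u := by
  simp only [gad]
  linear_combination (1 / (S'.card : ℝ)) * hM u r

lemma gad_contract (hM : ∀ a b, M a b = M b a) (hc : S'.card ≠ 0)
    (t r : Fin n) :
    ∑ u ∈ S', gad S' M t u r = M t r := by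
  have hc' : ((S'.card : ℕ) : ℝ) ≠ 0 := Nat.cast_ne_zero.mpr hc
  have h1 : ∑ u ∈ S', M t u = rho S' M t := rfl
  have h2 : ∑ u ∈ S', M u r = rho S' M r := by
    rw [rho]; exact Finset.sum_congr rfl fun u _ => hM u r
  have h3 : ∑ u ∈ S', rho S' M u = sig S' M := rfl
  simp only [gad, Finset.sum_add_distrib, Finset.sum_sub_distrib, ← Finset.mul_sum,
    Finset.sum_const, nsmul_eq_mul, h1, h2, h3]
  field_simp
  ring

end gad

/-! ### Triple products -/

def wmap (n : ℕ) [NeZero n] (t : Fin n) : V n → ℝ := fun X => X.2 t - X.1 (lastI n)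

lemma wmap_add [NeZero n] (t : Fin n) (a b : V n) :
    wmap n t (a + b) = wmap n t a + wmap n t b := by simp [wmap]; ring

lemma wmap_smul [NeZero n] (t : Fin n) (c : ℝ) (a : V n) :
    wmap n t (c • a) = c * wmap n t a := by simp [wmap]; ring

lemma wmap_hvF [NeZero n] (t u : Fin n) :
    wmap n t (hvF u) = -(if lastI n = u then 1 else 0) := by
  simp [wmap, hvF_fst]

lemma wmap_vvF [NeZero n] (t u : Fin n) :
    wmap n t (vvF u) = if t = u then 1 else 0 := by
  simp [wmap, vvF_snd]

def triProd (U : Fin n → Fin n → Fin n → ℝ) (S' : Finset (Fin n))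
    (w : Fin n → V n → ℝ) : V n → V n → V n → ℝ :=
  fun X Y Z => ∑ t ∈ S', ∑ u ∈ S', ∑ r ∈ S', U t u r * (w t X * (w u Y * w r Z))

section triProd
variable {U : Fin n → Fin n → Fin n → ℝ} {S' : Finset (Fin n)} {w : Fin n → V n → ℝ}

lemma triProd_trilin (hadd : ∀ t a b, w t (a + b) = w t a + w t b)
    (hsmul : ∀ t (c : ℝ) a, w t (c • a) = c * w t a) :
    IsTrilin n (triProd U S' w) := by
  have hA : ∀ (f g : Fin n → Fin n → Fin n → ℝ),
      (∑ t ∈ S', ∑ u ∈ S', ∑ r ∈ S', (f t u r + g t u r)) =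
      (∑ t ∈ S', ∑ u ∈ S', ∑ r ∈ S', f t u r) + ∑ t ∈ S', ∑ u ∈ S', ∑ r ∈ S', g t u r := by
    intro f g
    rw [← Finset.sum_add_distrib]
    refine Finset.sum_congr rfl fun t _ => ?_
    rw [← Finset.sum_add_distrib]
    refine Finset.sum_congr rfl fun u _ => ?_
    rw [← Finset.sum_add_distrib]
  refine ⟨fun X X' Y Z => ?_, fun c X Y Z => ?_, fun X Y Y' Z => ?_,
    fun c X Y Z => ?_, fun X Y Z Z' => ?_, fun c X Y Z => ?_⟩ <;>
    simp only [triProd, hadd, hsmul]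
  · rw [← hA]
    exact Finset.sum_congr rfl fun t _ => Finset.sum_congr rfl fun u _ =>
      Finset.sum_congr rfl fun r _ => by ring
  · simp only [Finset.mul_sum]
    exact Finset.sum_congr rfl fun t _ => Finset.sum_congr rfl fun u _ =>
      Finset.sum_congr rfl fun r _ => by ring
  · rw [← hA]
    exact Finset.sum_congr rfl fun t _ => Finset.sum_congr rfl fun u _ =>
      Finset.sum_congr rfl fun r _ => by ring
  · simp only [Finset.mul_sum]
    exact Finset.sum_congr rfl fun t _ => Finset.sum_congr rfl fun u _ =>
      Finset.sum_congr rfl fun r _ => by ring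
  · rw [← hA]
    exact Finset.sum_congr rfl fun t _ => Finset.sum_congr rfl fun u _ =>
      Finset.sum_congr rfl fun r _ => by ring
  · simp only [Finset.mul_sum]
    exact Finset.sum_congr rfl fun t _ => Finset.sum_congr rfl fun u _ =>
      Finset.sum_congr rfl fun r _ => by ring

lemma triProd_symm12 (hU : ∀ t u r, U t u r = U u t r) (X Y Z : V n) :
    triProd U S' w X Y Z = triProd U S' w Y X Z := by
  simp only [triProd]
  rw [Finset.sum_comm]
  refine Finset.sum_congr rfl fun u _ => Finset.sum_congr rfl fun t _ =>
    Finset.sum_congr rfl fun r _ => ?_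
  rw [hU t u r]; ring

lemma triProd_symm23 (hU : ∀ t u r, U t u r = U t r u) (X Y Z : V n) :
    triProd U S' w X Y Z = triProd U S' w X Z Y := by
  simp only [triProd]
  refine Finset.sum_congr rfl fun t _ => ?_
  rw [Finset.sum_comm]
  refine Finset.sum_congr rfl fun r _ => Finset.sum_congr rfl fun u _ => ?_
  rw [hU t u r]; ring

lemma triProd_zero₁ {x : V n} (hx : ∀ t, t ∈ S' → w t x = 0) (Y Z : V n) :
    triProd U S' w x Y Z = 0 := by
  refine Finset.sum_eq_zero fun t ht => Finset.sum_eq_zero fun u _ =>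
    Finset.sum_eq_zero fun r _ => ?_
  rw [hx t ht]; ring

end triProd

/-! ### Function-level submodules -/

theorem IsBilin.add {a b : V n → V n → ℝ} (ha : IsBilin n a) (hb : IsBilin n b) :
    IsBilin n (a + b) := by
  obtain ⟨ha1, ha2, ha3, ha4⟩ := ha
  obtain ⟨hb1, hb2, hb3, hb4⟩ := hb
  refine ⟨fun X X' Y => ?_, fun c X Y => ?_, fun X Y Y' => ?_, fun c X Y => ?_⟩ <;>
    simp only [Pi.add_apply]
  · linear_combination ha1 X X' Y + hb1 X X' Y
  · linear_combination ha2 c X Y + hb2 c X Y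
  · linear_combination ha3 X Y Y' + hb3 X Y Y'
  · linear_combination ha4 c X Y + hb4 c X Y

theorem IsBilin.smul (c : ℝ) {a : V n → V n → ℝ} (ha : IsBilin n a) :
    IsBilin n (c • a) := by
  obtain ⟨ha1, ha2, ha3, ha4⟩ := ha
  refine ⟨fun X X' Y => ?_, fun d X Y => ?_, fun X Y Y' => ?_, fun d X Y => ?_⟩ <;>
    simp only [Pi.smul_apply, smul_eq_mul]
  · linear_combination c * ha1 X X' Y
  · linear_combination c * ha2 d X Y
  · linear_combination c * ha3 X Y Y'
  · linear_combination c * ha4 d X Y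

theorem IsBilin.zero : IsBilin n (0 : V n → V n → ℝ) :=
  ⟨fun _ _ _ => by simp, fun _ _ _ => by simp, fun _ _ _ => by simp, fun _ _ _ => by simp⟩

/-- Function-level version of `g2P1e`. -/
def g2f (n k : ℕ) : Submodule ℝ (V n → V n → ℝ) where
  carrier := {B | IsBilin n B ∧ (∀ X Y, B X Y = B Y X) ∧ (∀ X, B X (Cvec n) = 0) ∧
    (∀ X, B (Svec n) (Jmap n X) = B X (Cvec n)) ∧
    (∀ j, 1 ≤ j → j ≤ k → B (evec n j) = 0)}
  add_mem' := by
    rintro a b ⟨haB, ha1, ha2, ha3, ha4⟩ ⟨hbB, hb1, hb2, hb3, hb4⟩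
    refine ⟨haB.add hbB, fun X Y => ?_, fun X => ?_, fun X => ?_, fun j hj1 hj2 => ?_⟩ <;>
      simp only [Pi.add_apply]
    · linear_combination ha1 X Y + hb1 X Y
    · linear_combination ha2 X + hb2 X
    · linear_combination ha3 X + hb3 X
    · rw [ha4 j hj1 hj2, hb4 j hj1 hj2]; simp
  zero_mem' := ⟨IsBilin.zero, fun X Y => by simp, fun X => by simp, fun X => by simp,
    fun j hj1 hj2 => by simp⟩
  smul_mem' := by
    rintro c a ⟨haB, ha1, ha2, ha3, ha4⟩
    refine ⟨haB.smul c, fun X Y => ?_, fun X => ?_, fun X => ?_, fun j hj1 hj2 => ?_⟩ <;>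
      simp only [Pi.smul_apply, smul_eq_mul]
    · linear_combination c * ha1 X Y
    · linear_combination c * ha2 X
    · linear_combination c * ha3 X
    · rw [ha4 j hj1 hj2]; simp

/-- Coercion of bundled bilinear forms to functions, as a linear map. -/
def coe2 (n : ℕ) : Bil n →ₗ[ℝ] (V n → V n → ℝ) where
  toFun A := fun X Y => A X Y
  map_add' a b := by funext X Y; simp
  map_smul' c a := by funext X Y; simp

lemma coe2_injective : Function.Injective (coe2 n) := by
  intro a b h
  exact LinearMap.ext fun X => LinearMap.ext fun Y => congrFun (congrFun h X) Y

lemma map_coe2_g2P1e (k : ℕ) : (g2P1e n k).map (coe2 n) = g2f n k := by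
  ext B
  simp only [Submodule.mem_map]
  constructor
  · rintro ⟨A, ⟨h1, h2, h3, h4⟩, rfl⟩
    refine ⟨⟨fun X X' Y => by simp [coe2], fun c X Y => by simp [coe2],
      fun X Y Y' => by simp [coe2], fun c X Y => by simp [coe2]⟩,
      fun X Y => h1 X Y, fun X => h2 X, fun X => h3 X, fun j hj1 hj2 => ?_⟩
    funext X; exact h4 j hj1 hj2 X
  · rintro ⟨⟨hB1, hB2, hB3, hB4⟩, h1, h2, h3, h4⟩
    refine ⟨LinearMap.mk₂ ℝ B hB1 (fun c X Y => by rw [hB2 c X Y]; rfl) hB3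
      (fun c X Y => by rw [hB4 c X Y]; rfl), ⟨fun X Y => h1 X Y, fun X => h2 X,
      fun X => h3 X, fun j hj1 hj2 X => ?_⟩, rfl⟩
    show B (evec n j) X = 0
    rw [h4 j hj1 hj2]; rfl

lemma finrank_g2P1e_eq (k : ℕ) :
    Module.finrank ℝ (g2P1e n k) = Module.finrank ℝ (g2f n k) := by
  rw [← map_coe2_g2P1e]
  exact (Submodule.equivMapOfInjective (coe2 n) coe2_injective (g2P1e n k)).finrank_eq

lemma g2P1_eq_g2P1e_zero : g2P1 n = g2P1e n 0 := by
  ext A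
  show _ ∧ _ ∧ _ ↔ _ ∧ _ ∧ _ ∧ _
  refine ⟨fun ⟨h1, h2, h3⟩ => ⟨h1, h2, h3, fun j hj1 hj2 => by omega⟩,
    fun ⟨h1, h2, h3, _⟩ => ⟨h1, h2, h3⟩⟩

/-- The filtration of `g3P1` by annihilation of initial basis vectors. -/
def GT (n k : ℕ) : Submodule ℝ (V n → V n → V n → ℝ) where
  carrier := {A | A ∈ g3P1 n ∧ ∀ j, 1 ≤ j → j ≤ k → A (evec n j) = 0}
  add_mem' := by
    rintro a b ⟨ha, ha4⟩ ⟨hb, hb4⟩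
    exact ⟨(g3P1 n).add_mem ha hb, fun j hj1 hj2 => by
      show a (evec n j) + b (evec n j) = 0
      rw [ha4 j hj1 hj2, hb4 j hj1 hj2]; simp⟩
  zero_mem' := ⟨(g3P1 n).zero_mem, fun j hj1 hj2 => rfl⟩
  smul_mem' := by
    rintro c a ⟨ha, ha4⟩
    exact ⟨(g3P1 n).smul_mem c ha, fun j hj1 hj2 => by
      show c • a (evec n j) = 0
      rw [ha4 j hj1 hj2]; simp⟩

lemma GT_le_g3P1 (k : ℕ) : GT n k ≤ g3P1 n := fun A hA => hA.1

lemma GT_zero : GT n 0 = g3P1 n := by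
  ext A
  exact ⟨fun h => h.1, fun h => ⟨h, fun j hj1 hj2 => by omega⟩⟩

/-- Evaluation of the first slot at `evec n k`, as a linear map. -/
def phi (n k : ℕ) : (V n → V n → V n → ℝ) →ₗ[ℝ] (V n → V n → ℝ) where
  toFun A := A (evec n k)
  map_add' a b := rfl
  map_smul' c a := rfl

/-! ### Finite dimensionality -/

def bv (n : ℕ) : Fin n ⊕ Fin n → V n
  | Sum.inl t => hvF t
  | Sum.inr t => vvF t

def evalT (n : ℕ) :
    (V n → V n → V n → ℝ) →ₗ[ℝ]
      (Fin n ⊕ Fin n → Fin n ⊕ Fin n → Fin n ⊕ Fin n → ℝ) where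
  toFun A := fun i j l => A (bv n i) (bv n j) (bv n l)
  map_add' a b := rfl
  map_smul' c a := rfl

lemma tri_zero_of_basis {A : V n → V n → V n → ℝ} (hA : IsTrilin n A)
    (h : ∀ i j l, A (bv n i) (bv n j) (bv n l) = 0) : A = 0 := by
  obtain ⟨h1, h2, h3, h4, h5, h6⟩ := hA
  funext X Y Z
  show A X Y Z = 0
  refine vanish_of_basis (f := fun X => A X Y Z) (fun a b => h1 a b Y Z) (fun c a => h2 c a Y Z) ?_ ?_ X
  · intro t
    refine vanish_of_basis (f := fun Y => A (hvF t) Y Z) (fun a b => h3 (hvF t) a b Z) (fun c a => h4 c (hvF t) a Z) ?_ ?_ Y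
    · intro u
      exact vanish_of_basis (f := fun Z => A (hvF t) (hvF u) Z) (fun a b => h5 (hvF t) (hvF u) a b)
        (fun c a => h6 c (hvF t) (hvF u) a)
        (fun r => h (Sum.inl t) (Sum.inl u) (Sum.inl r))
        (fun r => h (Sum.inl t) (Sum.inl u) (Sum.inr r)) Z
    · intro u
      exact vanish_of_basis (f := fun Z => A (hvF t) (vvF u) Z) (fun a b => h5 (hvF t) (vvF u) a b)
        (fun c a => h6 c (hvF t) (vvF u) a)
        (fun r => h (Sum.inl t) (Sum.inr u) (Sum.inl r))
        (fun r => h (Sum.inl t) (Sum.inr u) (Sum.inr r)) Z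
  · intro t
    refine vanish_of_basis (f := fun Y => A (vvF t) Y Z) (fun a b => h3 (vvF t) a b Z) (fun c a => h4 c (vvF t) a Z) ?_ ?_ Y
    · intro u
      exact vanish_of_basis (f := fun Z => A (vvF t) (hvF u) Z) (fun a b => h5 (vvF t) (hvF u) a b)
        (fun c a => h6 c (vvF t) (hvF u) a)
        (fun r => h (Sum.inr t) (Sum.inl u) (Sum.inl r))
        (fun r => h (Sum.inr t) (Sum.inl u) (Sum.inr r)) Z
    · intro u
      exact vanish_of_basis (f := fun Z => A (vvF t) (vvF u) Z) (fun a b => h5 (vvF t) (vvF u) a b)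
        (fun c a => h6 c (vvF t) (vvF u) a)
        (fun r => h (Sum.inr t) (Sum.inr u) (Sum.inl r))
        (fun r => h (Sum.inr t) (Sum.inr u) (Sum.inr r)) Z

instance g3P1_finiteDimensional : FiniteDimensional ℝ (g3P1 n) := by
  refine FiniteDimensional.of_injective ((evalT n).comp (g3P1 n).subtype)
    (LinearMap.ker_eq_bot.mp (le_bot_iff.mp fun x hx => ?_))
  obtain ⟨A, hA⟩ := x
  simp only [LinearMap.mem_ker, LinearMap.comp_apply, Submodule.subtype_apply] at hx
  have hA0 : A = 0 := by
    refine tri_zero_of_basis hA.1 fun i j l => ?_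
    exact congrFun (congrFun (congrFun hx i) j) l
  simp [hA0]

instance GT_finiteDimensional (k : ℕ) : FiniteDimensional ℝ (GT n k) :=
  Submodule.finiteDimensional_of_le (GT_le_g3P1 k)

/-! ### evec case lemmas -/

lemma apply_sum {α : Type*} {f : V n → ℝ} (hadd : ∀ a b, f (a + b) = f a + f b)
    (h0 : f 0 = 0) (s : Finset α) (g : α → V n) :
    f (∑ i ∈ s, g i) = ∑ i ∈ s, f (g i) := by
  induction s using Finset.cons_induction with
  | empty => simpa
  | cons a s ha ih => rw [Finset.sum_cons, hadd, ih, Finset.sum_cons]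

lemma evec_lt {j : ℕ} (h1 : 1 ≤ j) (h2 : j ≤ n - 1) (hn : 1 ≤ n) :
    evec n j = hvF (⟨j - 1, by omega⟩ : Fin n) := by
  rw [evec, if_pos (by omega)]
  show hvec n j = hvec n (j - 1 + 1)
  congr 1; omega

lemma evec_gt {j : ℕ} (h1 : n < j) (h2 : j ≤ 2 * n) :
    evec n j = vvF (⟨j - n - 1, by omega⟩ : Fin n) := by
  rw [evec, if_neg (by omega), if_neg (by omega)]
  show vvec n (j - n) = vvec n (j - n - 1 + 1)
  congr 1; omega

lemma evec_nn [NeZero n] : evec n n = Svec n + ∑ t : Fin n, vvF t := by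
  rw [evec, if_neg (by omega), if_pos rfl]
  congr 1
  refine Prod.ext ?_ ?_
  · simp [Prod.fst_sum, vvec, vvF]
  · funext s
    simp only [Prod.snd_sum, Finset.sum_apply]
    have hL : ∑ i ∈ Finset.Icc 1 n, (vvec n i).2 s = 1 := by
      rw [show (∑ i ∈ Finset.Icc 1 n, (vvec n i).2 s) =
        ∑ i ∈ Finset.Icc 1 n, (if (s : ℕ) + 1 = i then (1:ℝ) else 0) from rfl,
        Finset.sum_ite_eq, if_pos (by simp only [Finset.mem_Icc]; have := s.isLt; omega)]
    have hR : (∑ t : Fin n, (vvF t).2 s) = 1 := by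
      simp only [vvF_snd]
      rw [Finset.sum_ite_eq Finset.univ s (fun _ => (1:ℝ)), if_pos (Finset.mem_univ s)]
    rw [hL, hR]

/-! ### More wmap and triProd evaluation lemmas -/

lemma wmap_zero [NeZero n] (t : Fin n) : wmap n t (0 : V n) = 0 := by simp [wmap]

lemma wmap_S [NeZero n] (t : Fin n) : wmap n t (Svec n) = -1 := by
  show (0 : Fin n → ℝ) t - dlt n n (lastI n) = -1
  rw [dlt_n_apply, if_pos rfl]
  simp

lemma wmap_C [NeZero n] (t : Fin n) :
    wmap n t (Cvec n) = if t = lastI n then 1 else 0 := by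
  show dlt n n t - (0 : Fin n → ℝ) (lastI n) = _
  rw [dlt_n_apply]
  simp

lemma wmap_evec_nn [NeZero n] (t : Fin n) : wmap n t (evec n n) = 0 := by
  rw [evec_nn, wmap_add, apply_sum (f := wmap n t) (wmap_add t) (wmap_zero t), wmap_S]
  have : ∑ x : Fin n, wmap n t (vvF x) = 1 := by
    simp only [wmap_vvF]
    rw [Finset.sum_ite_eq Finset.univ t (fun _ => (1:ℝ)), if_pos (Finset.mem_univ t)]
  rw [this]
  ring

section triProd2
variable [NeZero n] {U : Fin n → Fin n → Fin n → ℝ} {S' : Finset (Fin n)}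

lemma triProd_zero₃ {z : V n} (hz : ∀ r, r ∈ S' → wmap n r z = 0) (X Y : V n) :
    triProd U S' (wmap n) X Y z = 0 := by
  refine Finset.sum_eq_zero fun t _ => Finset.sum_eq_zero fun u _ =>
    Finset.sum_eq_zero fun r hr => ?_
  rw [hz r hr]; ring

lemma triProd_SS_vv (i : Fin n) :
    triProd U S' (wmap n) (Svec n) (Svec n) (vvF i) =
      if i ∈ S' then ∑ t ∈ S', ∑ u ∈ S', U t u i else 0 := by
  have h1 : ∀ t u : Fin n, (∑ r ∈ S', U t u r *
      (wmap n t (Svec n) * (wmap n u (Svec n) * wmap n r (vvF i)))) =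
      if i ∈ S' then U t u i else 0 := by
    intro t u
    calc (∑ r ∈ S', U t u r *
        (wmap n t (Svec n) * (wmap n u (Svec n) * wmap n r (vvF i)))) =
        ∑ r ∈ S', if r = i then U t u r else 0 := by
          refine Finset.sum_congr rfl fun r _ => ?_
          rw [wmap_S, wmap_S, wmap_vvF]
          split <;> ring
      _ = if i ∈ S' then U t u i else 0 := Finset.sum_ite_eq' S' i fun r => U t u r
  rw [show triProd U S' (wmap n) (Svec n) (Svec n) (vvF i) =
    ∑ t ∈ S', ∑ u ∈ S', (if i ∈ S' then U t u i else 0) from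
    Finset.sum_congr rfl fun t _ => Finset.sum_congr rfl fun u _ => h1 t u]
  by_cases hi : i ∈ S' <;> simp [hi]

lemma triProd_vv_S_vv (l i : Fin n) :
    triProd U S' (wmap n) (vvF l) (Svec n) (vvF i) =
      if i ∈ S' then (if l ∈ S' then -∑ u ∈ S', U l u i else 0) else 0 := by
  have h1 : ∀ t u : Fin n, (∑ r ∈ S', U t u r *
      (wmap n t (vvF l) * (wmap n u (Svec n) * wmap n r (vvF i)))) =
      if i ∈ S' then (if t = l then -U t u i else 0) else 0 := by
    intro t u
    calc (∑ r ∈ S', U t u r *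
        (wmap n t (vvF l) * (wmap n u (Svec n) * wmap n r (vvF i)))) =
        ∑ r ∈ S', if r = i then (if t = l then -U t u r else 0) else 0 := by
          refine Finset.sum_congr rfl fun r _ => ?_
          rw [wmap_vvF, wmap_S, wmap_vvF]
          split <;> split <;> ring
      _ = if i ∈ S' then (if t = l then -U t u i else 0) else 0 :=
          Finset.sum_ite_eq' S' i fun r => (if t = l then -U t u r else 0)
  rw [show triProd U S' (wmap n) (vvF l) (Svec n) (vvF i) =
    ∑ t ∈ S', ∑ u ∈ S', (if i ∈ S' then (if t = l then -U t u i else 0) else 0) from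
    Finset.sum_congr rfl fun t _ => Finset.sum_congr rfl fun u _ => h1 t u]
  by_cases hi : i ∈ S'
  · simp only [hi, if_pos]
    have h2 : ∀ t : Fin n, (∑ u ∈ S', if t = l then -U t u i else 0) =
        if t = l then -∑ u ∈ S', U t u i else 0 := by
      intro t
      split
      · rw [← Finset.sum_neg_distrib]
      · exact Finset.sum_const_zero
    rw [Finset.sum_congr rfl fun t _ => h2 t, Finset.sum_ite_eq' S' l
      (fun t => -∑ u ∈ S', U t u i)]
  · simp [hi]

end triProd2

/-! ### Kernel and image identifications -/

lemma GT_inf_ker (k : ℕ) (hk : 1 ≤ k) :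
    GT n (k - 1) ⊓ LinearMap.ker (phi n k) = GT n k := by
  ext A
  simp only [Submodule.mem_inf, LinearMap.mem_ker]
  constructor
  · rintro ⟨⟨hg3, hann⟩, hker⟩
    refine ⟨hg3, fun j hj1 hj2 => ?_⟩
    rcases Nat.lt_or_ge j k with h | h
    · exact hann j hj1 (by omega)
    · have : j = k := by omega
      subst this; exact hker
  · rintro ⟨hg3, hann⟩
    exact ⟨⟨hg3, fun j hj1 hj2 => hann j hj1 (by omega)⟩, hann k hk le_rfl⟩

lemma map_GT_le (k : ℕ) (hk : 1 ≤ k) :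
    (GT n (k - 1)).map (phi n k) ≤ g2f n (k - 1) := by
  rintro _ ⟨A, ⟨⟨hT, hs12, hs23, hC, hspray⟩, hann⟩, rfl⟩
  obtain ⟨h1, h2, h3, h4, h5, h6⟩ := hT
  set e := evec n k
  show (fun X Y => A e X Y) ∈ g2f n (k - 1)
  refine ⟨⟨fun X X' Y => h3 e X X' Y, fun c X Y => h4 c e X Y,
    fun X Y Y' => h5 e X Y Y', fun c X Y => h6 c e X Y⟩,
    fun X Y => hs23 e X Y, fun X => hC e X, fun X => hspray e X,
    fun j hj1 hj2 => ?_⟩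
  funext Y
  show A e (evec n j) Y = 0
  rw [hs12 e (evec n j) Y]
  exact congrFun (congrFun (hann j hj1 hj2) e) Y

/-! ### Bottom lemmas -/

lemma evec_succ_hvF (t : Fin n) (ht : (t : ℕ) < n - 1) :
    evec n ((t : ℕ) + 1) = hvF t := by
  rw [evec_lt (by omega) (by omega) (by omega)]
  congr 1

lemma evec_vvF (t : Fin n) (hn : 1 ≤ n) : evec n (n + (t : ℕ) + 1) = vvF t := by
  rw [evec_gt (by omega) (by omega)]
  congr 1
  simp [Fin.ext_iff]
  omega

lemma GT_top_eq_bot (hn : 1 ≤ n) : GT n (2 * n) = ⊥ := by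
  haveI : NeZero n := ⟨by omega⟩
  rw [eq_bot_iff]
  rintro A ⟨⟨hT, hs12, hs23, hC, hspray⟩, hann⟩
  obtain ⟨h1, h2, h3, h4, h5, h6⟩ := hT
  have h0 : ∀ Y Z, A 0 Y Z = 0 := fun Y Z => by
    have := h2 0 0 Y Z; simpa using this
  have hvv : ∀ t : Fin n, A (vvF t) = 0 := fun t => by
    rw [← evec_vvF t hn]; exact hann _ (by omega) (by omega)
  have hhv : ∀ t : Fin n, (t : ℕ) < n - 1 → A (hvF t) = 0 := fun t ht => by
    rw [← evec_succ_hvF t ht]; exact hann _ (by omega) (by omega)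
  have hS : ∀ Y Z, A (Svec n) Y Z = 0 := by
    intro Y Z
    have he : A (evec n n) Y Z = A (Svec n) Y Z + ∑ t : Fin n, A (vvF t) Y Z := by
      rw [evec_nn, h1]
      congr 1
      exact apply_sum (f := fun X => A X Y Z) (fun a b => h1 a b Y Z) (h0 Y Z) _ _
    have h0' : A (evec n n) Y Z = 0 :=
      congrFun (congrFun (hann n (by omega) (by omega)) Y) Z
    rw [h0'] at he
    have : ∑ t : Fin n, A (vvF t) Y Z = 0 := by
      refine Finset.sum_eq_zero fun t _ => ?_
      exact congrFun (congrFun (hvv t) Y) Z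
    rw [this] at he
    linarith
  have : A = 0 := by
    funext X Y Z
    refine vanish_of_basis (f := fun X => A X Y Z) (fun a b => h1 a b Y Z)
      (fun c a => h2 c a Y Z) (fun t => ?_) (fun t => ?_) X
    · show A (hvF t) Y Z = 0
      rcases Nat.lt_or_ge (t : ℕ) (n - 1) with h | h
      · exact congrFun (congrFun (hhv t h) Y) Z
      · have ht : t = lastI n := by
          simp only [Fin.ext_iff, lastI_val]; omega
        rw [ht, ← Svec_eq]; exact hS Y Z
    · show A (vvF t) Y Z = 0
      exact congrFun (congrFun (hvv t) Y) Z
  simp [this]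

lemma g2f_top_eq_bot (hn : 1 ≤ n) : g2f n (2 * n) = ⊥ := by
  haveI : NeZero n := ⟨by omega⟩
  rw [eq_bot_iff]
  rintro B ⟨⟨h1, h2, h3, h4⟩, hs, hC, hspray, hann⟩
  have h0 : ∀ Y, B 0 Y = 0 := fun Y => by
    have := h2 0 0 Y; simpa using this
  have hvv : ∀ t : Fin n, B (vvF t) = 0 := fun t => by
    rw [← evec_vvF t hn]; exact hann _ (by omega) (by omega)
  have hhv : ∀ t : Fin n, (t : ℕ) < n - 1 → B (hvF t) = 0 := fun t ht => by
    rw [← evec_succ_hvF t ht]; exact hann _ (by omega) (by omega)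
  have hS : ∀ Y, B (Svec n) Y = 0 := by
    intro Y
    have he : B (evec n n) Y = B (Svec n) Y + ∑ t : Fin n, B (vvF t) Y := by
      rw [evec_nn, h1]
      congr 1
      exact apply_sum (f := fun X => B X Y) (fun a b => h1 a b Y) (h0 Y) _ _
    have h0' : B (evec n n) Y = 0 := congrFun (hann n (by omega) (by omega)) Y
    rw [h0'] at he
    have : ∑ t : Fin n, B (vvF t) Y = 0 := by
      refine Finset.sum_eq_zero fun t _ => ?_
      exact congrFun (hvv t) Y
    rw [this] at he
    linarith
  have : B = 0 := by
    funext X Y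
    refine vanish_of_basis (f := fun X => B X Y) (fun a b => h1 a b Y)
      (fun c a => h2 c a Y) (fun t => ?_) (fun t => ?_) X
    · show B (hvF t) Y = 0
      rcases Nat.lt_or_ge (t : ℕ) (n - 1) with h | h
      · exact congrFun (hhv t h) Y
      · have ht : t = lastI n := by
          simp only [Fin.ext_iff, lastI_val]; omega
        rw [ht, ← Svec_eq]; exact hS Y
    · show B (vvF t) Y = 0
      exact congrFun (hvv t) Y
  simp [this]

/-! ### The rank–nullity step -/

lemma step (k : ℕ) (hk : 1 ≤ k)
    (hmap : (GT n (k - 1)).map (phi n k) = g2f n (k - 1)) :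
    Module.finrank ℝ (GT n (k - 1)) =
      Module.finrank ℝ (g2f n (k - 1)) + Module.finrank ℝ (GT n k) := by
  classical
  set p := GT n (k - 1) with hp
  have h1 := LinearMap.finrank_range_add_finrank_ker ((phi n k).comp p.subtype)
  have hr : LinearMap.range ((phi n k).comp p.subtype) = p.map (phi n k) := by
    rw [LinearMap.range_comp, Submodule.range_subtype]
  have hker : LinearMap.ker ((phi n k).comp p.subtype) =
      (p ⊓ LinearMap.ker (phi n k)).comap p.subtype := by
    rw [LinearMap.ker_comp, Submodule.comap_inf, Submodule.comap_subtype_self, top_inf_eq]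
  have hk2 : Module.finrank ℝ (LinearMap.ker ((phi n k).comp p.subtype)) =
      Module.finrank ℝ (p ⊓ LinearMap.ker (phi n k) : Submodule ℝ _) := by
    rw [hker]
    exact (Submodule.comapSubtypeEquivOfLe inf_le_left).finrank_eq
  rw [hr, hk2, hmap, GT_inf_ker k hk] at h1
  omega

/-! ### Surjectivity: case `k ≤ n - 1` -/

lemma case_lt (hn : 1 ≤ n) {k : ℕ} (hk1 : 1 ≤ k) (hk2 : k ≤ n - 1) {B : V n → V n → ℝ}
    (hB : B ∈ g2f n (k - 1)) : B ∈ (GT n (k - 1)).map (phi n k) := by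
  haveI : NeZero n := ⟨by omega⟩
  obtain ⟨⟨hb1, hb2, hb3, hb4⟩, hBs, hBC, hBsp, hBann⟩ := hB
  set p : Fin n := ⟨k - 1, by omega⟩ with hp
  set ε : V n → ℝ := fun X => X.1 p with hε
  have hεadd : ∀ a b : V n, ε (a + b) = ε a + ε b := fun a b => rfl
  have hεsmul : ∀ (c : ℝ) (a : V n), ε (c • a) = c * ε a := fun c a => rfl
  have he : evec n k = hvF p := evec_lt hk1 hk2 hn
  have hεe : ε (hvF p) = 1 := by
    show (hvF p).1 p = 1
    rw [hvF_fst, if_pos rfl]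
  set A := sym3 ε (hvF p) B with hA
  have hTA : IsTrilin n A := sym3_trilin hεadd hεsmul ⟨hb1, hb2, hb3, hb4⟩
  have hεC : ε (Cvec n) = 0 := rfl
  have hCA : ∀ X Y, A X Y (Cvec n) = 0 := fun X Y => sym3_zero₃ hεC hBC X Y
  have hεS : ε (Svec n) = 0 := by
    show dlt n n p = 0
    rw [dlt_n_apply, if_neg]
    simp only [Fin.ext_iff, lastI_val, hp]
    omega
  have hεJ : ∀ Y : V n, ε (Jmap n Y) = 0 := fun Y => rfl
  have hsprayA : ∀ X Y, A X (Svec n) (Jmap n Y) = A X Y (Cvec n) := by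
    intro X Y
    rw [hCA X Y]
    have hBSJ : B (Svec n) (Jmap n Y) = 0 := by rw [hBsp]; exact hBC Y
    simp only [hA, sym3, hεS, hεJ, hBSJ]
    ring
  have hmem3 : A ∈ g3P1 n := ⟨hTA, sym3_symm12 hBs, sym3_symm23 hBs, hCA, hsprayA⟩
  have hann : ∀ j, 1 ≤ j → j ≤ k - 1 → A (evec n j) = 0 := by
    intro j hj1 hj2
    funext Y Z
    have hej : evec n j = hvF ⟨j - 1, by omega⟩ := evec_lt hj1 (by omega) hn
    have h1 : ε (evec n j) = 0 := by
      rw [hej]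
      show (hvF _).1 p = 0
      rw [hvF_fst, if_neg]
      simp only [Fin.ext_iff, hp]
      omega
    have h2 : ∀ Y, B (evec n j) Y = 0 := fun Y => congrFun (hBann j hj1 hj2) Y
    have h3 : B (hvF p) (evec n j) = 0 := by rw [hBs]; exact h2 _
    exact sym3_ann h1 h2 h3 Y Z
  refine Submodule.mem_map.mpr ⟨A, ⟨hmem3, hann⟩, ?_⟩
  show A (evec n k) = B
  funext Y Z
  rw [he]
  exact sym3_eval hεe Y Z

/-! ### Surjectivity: case `k = 2n` -/

lemma case_top (hn : 1 ≤ n) {B : V n → V n → ℝ}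
    (hB : B ∈ g2f n (2 * n - 1)) : B ∈ (GT n (2 * n - 1)).map (phi n (2 * n)) := by
  haveI : NeZero n := ⟨by omega⟩
  obtain ⟨⟨h1, h2, h3, h4⟩, hBs, hBC, hBsp, hBann⟩ := hB
  have h0 : ∀ Y, B 0 Y = 0 := fun Y => by
    have := h2 0 0 Y; simpa using this
  have hvv : ∀ t : Fin n, B (vvF t) = 0 := by
    intro t
    rcases Nat.lt_or_ge (t : ℕ) (n - 1) with h | h
    · rw [← evec_vvF t hn]
      exact hBann _ (by omega) (by omega)
    · have ht : t = lastI n := by simp only [Fin.ext_iff, lastI_val]; omega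
      funext Y
      rw [ht, ← Cvec_eq, hBs]
      exact hBC Y
  have hhv : ∀ t : Fin n, (t : ℕ) < n - 1 → B (hvF t) = 0 := fun t ht => by
    rw [← evec_succ_hvF t ht]; exact hBann _ (by omega) (by omega)
  have hS : ∀ Y, B (Svec n) Y = 0 := by
    intro Y
    have he : B (evec n n) Y = B (Svec n) Y + ∑ t : Fin n, B (vvF t) Y := by
      rw [evec_nn, h1]
      congr 1
      exact apply_sum (f := fun X => B X Y) (fun a b => h1 a b Y) (h0 Y) _ _
    have h0' : B (evec n n) Y = 0 := congrFun (hBann n (by omega) (by omega)) Y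
    rw [h0'] at he
    have hz : ∑ t : Fin n, B (vvF t) Y = 0 := by
      refine Finset.sum_eq_zero fun t _ => ?_
      exact congrFun (hvv t) Y
    rw [hz] at he
    linarith
  have hB0 : B = 0 := by
    funext X Y
    refine vanish_of_basis (f := fun X => B X Y) (fun a b => h1 a b Y)
      (fun c a => h2 c a Y) (fun t => ?_) (fun t => ?_) X
    · show B (hvF t) Y = 0
      rcases Nat.lt_or_ge (t : ℕ) (n - 1) with h | h
      · exact congrFun (hhv t h) Y
      · have ht : t = lastI n := by simp only [Fin.ext_iff, lastI_val]; omega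
        rw [ht, ← Svec_eq]; exact hS Y
    · show B (vvF t) Y = 0
      exact congrFun (hvv t) Y
  refine Submodule.mem_map.mpr ⟨0, (GT n (2 * n - 1)).zero_mem, ?_⟩
  rw [hB0]
  rfl

/-! ### Surjectivity: case `k = n` -/

lemma case_n (hn : 1 ≤ n) {B : V n → V n → ℝ}
    (hB : B ∈ g2f n (n - 1)) : B ∈ (GT n (n - 1)).map (phi n n) := by
  haveI : NeZero n := ⟨by omega⟩
  obtain ⟨⟨hb1, hb2, hb3, hb4⟩, hBs, hBC, hBsp, hBann⟩ := hB
  have h0 : ∀ Y, B 0 Y = 0 := fun Y => by have := hb2 0 0 Y; simpa using this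
  set ε : V n → ℝ := fun X => X.1 (lastI n) with hε
  have hεadd : ∀ a b : V n, ε (a + b) = ε a + ε b := fun a b => rfl
  have hεsmul : ∀ (c : ℝ) (a : V n), ε (c • a) = c * ε a := fun c a => rfl
  set e := evec n n with heq
  set S' : Finset (Fin n) := Finset.univ.filter (fun t => (t : ℕ) < n - 1) with hS'
  set U := gad S' (fun t u => B (vvF t) (vvF u)) with hUdef
  have hMs : ∀ a b : Fin n, (fun t u => B (vvF t) (vvF u)) a b =
      (fun t u => B (vvF t) (vvF u)) b a := fun a b => hBs _ _
  set A := sym3 ε e B + triProd U S' (wmap n) with hA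
  -- epsilon values
  have hεS : ε (Svec n) = 1 := by
    show dlt n n (lastI n) = 1
    rw [dlt_n_apply, if_pos rfl]
  have hεvv : ∀ t, ε (vvF t) = 0 := fun t => rfl
  have hεC : ε (Cvec n) = 0 := rfl
  have hεJ : ∀ Y : V n, ε (Jmap n Y) = 0 := fun Y => rfl
  have hεhv : ∀ t : Fin n, (t : ℕ) < n - 1 → ε (hvF t) = 0 := by
    intro t ht
    show (hvF t).1 (lastI n) = 0
    rw [hvF_fst, if_neg]
    simp only [Fin.ext_iff, lastI_val]
    omega
  have hεe : ε e = 1 := by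
    rw [heq, evec_nn]
    show (Svec n + ∑ t : Fin n, vvF t).1 (lastI n) = 1
    rw [Prod.fst_add, Pi.add_apply]
    have h1 : (Svec n).1 (lastI n) = 1 := by
      show dlt n n (lastI n) = 1
      rw [dlt_n_apply, if_pos rfl]
    have h2 : (∑ t : Fin n, vvF t).1 (lastI n) = 0 := by
      rw [Prod.fst_sum]
      simp [vvF_fst]
    rw [h1, h2]
    norm_num
  -- B facts
  have hBhv : ∀ t : Fin n, (t : ℕ) < n - 1 → B (hvF t) = 0 := fun t ht => by
    rw [← evec_succ_hvF t ht]; exact hBann _ (by omega) (by omega)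
  have hBSvv : ∀ i, B (Svec n) (vvF i) = 0 := fun i => by
    rw [← Jmap_hvF, hBsp]; exact hBC _
  have hBe : ∀ X, B e X = B (Svec n) X + ∑ t : Fin n, B (vvF t) X := by
    intro X
    rw [heq, evec_nn, hb1]
    congr 1
    exact apply_sum (f := fun Z => B Z X) (fun a b => hb1 a b X) (h0 X) _ _
  have hMlast_left : ∀ i, B (vvF (lastI n)) (vvF i) = 0 := fun i => by
    rw [← Cvec_eq, hBs]; exact hBC _
  have hMlast_right : ∀ i, B (vvF i) (vvF (lastI n)) = 0 := fun i => by
    rw [← Cvec_eq]; exact hBC _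
  have hsumM : ∀ i, (∑ t : Fin n, B (vvF t) (vvF i)) = ∑ t ∈ S', B (vvF t) (vvF i) := by
    intro i
    rw [← Finset.sum_filter_add_sum_filter_not Finset.univ (fun t : Fin n => (t : ℕ) < n - 1)
      (fun t => B (vvF t) (vvF i))]
    have hcompl : Finset.univ.filter (fun t : Fin n => ¬ (t : ℕ) < n - 1) = {lastI n} := by
      ext t
      simp only [Finset.mem_filter, Finset.mem_univ, true_and, Finset.mem_singleton,
        Fin.ext_iff, lastI_val]
      have := t.isLt
      omega
    rw [hcompl, Finset.sum_singleton, hMlast_left, add_zero, hS']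
  have hBevv : ∀ i, B e (vvF i) = ∑ t ∈ S', B (vvF t) (vvF i) := by
    intro i
    rw [hBe, hBSvv, zero_add, hsumM]
  -- wmap facts
  have hwhv : ∀ (t u : Fin n), (u : ℕ) < n - 1 → wmap n t (hvF u) = 0 := by
    intro t u hu
    rw [wmap_hvF, if_neg, neg_zero]
    simp only [Fin.ext_iff, lastI_val]
    omega
  have hwC : ∀ r, r ∈ S' → wmap n r (Cvec n) = 0 := by
    intro r hr
    rw [wmap_C, if_neg]
    rw [hS'] at hr
    simp only [Finset.mem_filter] at hr
    simp only [Fin.ext_iff, lastI_val]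
    omega
  have hwe : ∀ t, wmap n t e = 0 := fun t => by rw [heq]; exact wmap_evec_nn t
  -- contraction
  have hctr : ∀ (i : Fin n), i ∈ S' → ∀ t', (∑ u ∈ S', U t' u i) = B (vvF t') (vvF i) :=
    fun i hi t' => gad_contract hMs (Finset.card_ne_zero_of_mem hi) t' i
  -- membership in g3P1
  have hTA : IsTrilin n A :=
    (sym3_trilin hεadd hεsmul ⟨hb1, hb2, hb3, hb4⟩).add
      (triProd_trilin wmap_add wmap_smul)
  have h12A : ∀ X Y Z, A X Y Z = A Y X Z := by
    intro X Y Z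
    show sym3 ε e B X Y Z + triProd U S' (wmap n) X Y Z = _
    rw [sym3_symm12 hBs, triProd_symm12 (fun t u r => gad_symm12 hMs t u r)]
    rfl
  have h23A : ∀ X Y Z, A X Y Z = A X Z Y := by
    intro X Y Z
    show sym3 ε e B X Y Z + triProd U S' (wmap n) X Y Z = _
    rw [sym3_symm23 hBs, triProd_symm23 (fun t u r => gad_symm23 hMs t u r)]
    rfl
  have hCA : ∀ X Y, A X Y (Cvec n) = 0 := by
    intro X Y
    show sym3 ε e B X Y (Cvec n) + triProd U S' (wmap n) X Y (Cvec n) = 0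
    rw [sym3_zero₃ hεC hBC, triProd_zero₃ hwC]
    ring
  -- spray basis claims
  have claim_h : ∀ (t i : Fin n), A (hvF t) (Svec n) (vvF i) = 0 := by
    intro t i
    show sym3 ε e B (hvF t) (Svec n) (vvF i) +
      triProd U S' (wmap n) (hvF t) (Svec n) (vvF i) = 0
    rcases Nat.lt_or_ge (t : ℕ) (n - 1) with ht | ht
    · have h1 : ε (hvF t) = 0 := hεhv t ht
      have h2 : ∀ Y, B (hvF t) Y = 0 := fun Y => congrFun (hBhv t ht) Y
      have h3 : triProd U S' (wmap n) (hvF t) (Svec n) (vvF i) = 0 :=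
        triProd_zero₁ (fun u _ => hwhv u t ht) _ _
      rw [h3]
      simp only [sym3, h1, h2, hεS, hεvv]
      ring
    · have ht' : t = lastI n := by simp only [Fin.ext_iff, lastI_val]; omega
      rw [ht', ← Svec_eq, triProd_SS_vv]
      by_cases hi : i ∈ S'
      · rw [if_pos hi]
        have hsum2 : (∑ t' ∈ S', ∑ u ∈ S', U t' u i) = ∑ t' ∈ S', B (vvF t') (vvF i) :=
          Finset.sum_congr rfl fun t' _ => hctr i hi t'
        rw [hsum2]
        have hs3 : sym3 ε e B (Svec n) (Svec n) (vvF i) = -∑ t' ∈ S', B (vvF t') (vvF i) := by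
          simp only [sym3, hεS, hεvv, hBSvv, hBevv]
          ring
        rw [hs3]
        ring
      · rw [if_neg hi, add_zero]
        have hs0 : (∑ t' ∈ S', B (vvF t') (vvF i)) = 0 := by
          have hi' : i = lastI n := by
            rw [hS'] at hi
            simp only [Finset.mem_filter, Finset.mem_univ, true_and, not_lt] at hi
            simp only [Fin.ext_iff, lastI_val]
            have := i.isLt
            omega
          rw [hi']
          exact Finset.sum_eq_zero fun t' _ => hMlast_right t'
        simp only [sym3, hεS, hεvv, hBSvv, hBevv]
        rw [hs0]
        ring
  have claim_v : ∀ (l i : Fin n), A (vvF l) (Svec n) (vvF i) = 0 := by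
    intro l i
    show sym3 ε e B (vvF l) (Svec n) (vvF i) +
      triProd U S' (wmap n) (vvF l) (Svec n) (vvF i) = 0
    have hs3 : sym3 ε e B (vvF l) (Svec n) (vvF i) = B (vvF l) (vvF i) := by
      simp only [sym3, hεS, hεvv, hBSvv]
      ring
    rw [hs3, triProd_vv_S_vv]
    by_cases hi : i ∈ S'
    · rw [if_pos hi]
      by_cases hl : l ∈ S'
      · rw [if_pos hl, hctr i hi l]
        ring
      · rw [if_neg hl]
        have hl' : l = lastI n := by
          rw [hS'] at hl
          simp only [Finset.mem_filter, Finset.mem_univ, true_and, not_lt] at hl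
          simp only [Fin.ext_iff, lastI_val]
          have := l.isLt
          omega
        rw [hl', hMlast_left]
        ring
    · rw [if_neg hi]
      have hi' : i = lastI n := by
        rw [hS'] at hi
        simp only [Finset.mem_filter, Finset.mem_univ, true_and, not_lt] at hi
        simp only [Fin.ext_iff, lastI_val]
        have := i.isLt
        omega
      rw [hi', hMlast_right]
      ring
  -- spray condition
  obtain ⟨t1, t2, t3, t4, t5, t6⟩ := hTA
  have hsprayA : ∀ X Y, A X (Svec n) (Jmap n Y) = A X Y (Cvec n) := by
    intro X Y
    rw [hCA X Y]
    have hstep3 : A X (Svec n) (Jmap n Y) = ∑ t : Fin n, (Jmap n Y).1 t *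
        A X (Svec n) (hvF t) + ∑ t : Fin n, (Jmap n Y).2 t * A X (Svec n) (vvF t) :=
      expand_fun (f := fun Z => A X (Svec n) Z) (fun a b => t5 X (Svec n) a b)
        (fun c a => t6 c X (Svec n) a) (Jmap n Y)
    rw [hstep3]
    have hz1 : (∑ t : Fin n, (Jmap n Y).1 t * A X (Svec n) (hvF t)) = 0 := by
      refine Finset.sum_eq_zero fun t _ => ?_
      show (0 : Fin n → ℝ) t * A X (Svec n) (hvF t) = 0
      simp
    have hz2 : (∑ t : Fin n, (Jmap n Y).2 t * A X (Svec n) (vvF t)) = 0 := by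
      refine Finset.sum_eq_zero fun t _ => ?_
      have h00 : A X (Svec n) (vvF t) = 0 :=
        vanish_of_basis (f := fun X => A X (Svec n) (vvF t)) (fun a b => t1 a b _ _)
          (fun c a => t2 c a _ _) (fun u => claim_h u t) (fun u => claim_v u t) X
      rw [h00, mul_zero]
    rw [hz1, hz2]
    ring
  have hmem3 : A ∈ g3P1 n := ⟨⟨t1, t2, t3, t4, t5, t6⟩, h12A, h23A, hCA, hsprayA⟩
  -- annihilation
  have hann : ∀ j, 1 ≤ j → j ≤ n - 1 → A (evec n j) = 0 := by
    intro j hj1 hj2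
    funext Y Z
    have hej : evec n j = hvF ⟨j - 1, by omega⟩ := evec_lt hj1 (by omega) hn
    show sym3 ε e B (evec n j) Y Z + triProd U S' (wmap n) (evec n j) Y Z = 0
    have h1 : ε (evec n j) = 0 := by
      rw [hej]; exact hεhv _ (by show j - 1 < n - 1; omega)
    have h2 : ∀ Y, B (evec n j) Y = 0 := fun Y => congrFun (hBann j hj1 hj2) Y
    have h3 : B e (evec n j) = 0 := by rw [hBs]; exact h2 _
    have h4 : triProd U S' (wmap n) (evec n j) Y Z = 0 := by
      rw [hej]
      exact triProd_zero₁ (fun u _ => hwhv u _ (by show j - 1 < n - 1; omega)) _ _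
    rw [sym3_ann h1 h2 h3 Y Z, h4]
    ring
  refine Submodule.mem_map.mpr ⟨A, ⟨hmem3, hann⟩, ?_⟩
  show A (evec n n) = B
  funext Y Z
  show sym3 ε e B (evec n n) Y Z + triProd U S' (wmap n) (evec n n) Y Z = B Y Z
  have h4 : triProd U S' (wmap n) (evec n n) Y Z = 0 :=
    triProd_zero₁ (fun u _ => wmap_evec_nn u) _ _
  have h5 : sym3 ε e B (evec n n) Y Z = B Y Z := by
    rw [← heq]
    exact sym3_eval hεe Y Z
  rw [h4, h5]
  ring

/-! ### Surjectivity: case `n < k < 2n` -/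

lemma case_gt (hn : 1 ≤ n) {k : ℕ} (hk1 : n < k) (hk2 : k < 2 * n) {B : V n → V n → ℝ}
    (hB : B ∈ g2f n (k - 1)) : B ∈ (GT n (k - 1)).map (phi n k) := by
  haveI : NeZero n := ⟨by omega⟩
  obtain ⟨⟨hb1, hb2, hb3, hb4⟩, hBs, hBC, hBsp, hBann⟩ := hB
  have h0 : ∀ Y, B 0 Y = 0 := fun Y => by have := hb2 0 0 Y; simpa using this
  have h0' : ∀ X, B X 0 = 0 := fun X => by have := hb4 0 X 0; simpa using this
  set p : Fin n := ⟨k - n - 1, by omega⟩ with hp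
  set ε : V n → ℝ := wmap n p with hε
  have hεadd : ∀ a b : V n, ε (a + b) = ε a + ε b := wmap_add p
  have hεsmul : ∀ (c : ℝ) (a : V n), ε (c • a) = c * ε a := wmap_smul p
  set e := vvF p with heq
  have he : evec n k = vvF p := by
    rw [evec_gt hk1 (by omega)]
  set S' : Finset (Fin n) := Finset.univ.filter
    (fun t => (p : ℕ) < (t : ℕ) ∧ (t : ℕ) < n - 1) with hS'
  set U := gad S' (fun t u => -B (vvF t) (vvF u)) with hUdef
  have hMs : ∀ a b : Fin n, (fun t u => -B (vvF t) (vvF u)) a b =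
      (fun t u => -B (vvF t) (vvF u)) b a := fun a b => by simp only [neg_inj]; exact hBs _ _
  set A := sym3 ε e B + triProd U S' (wmap n) with hA
  have hplast : (p : ℕ) < n - 1 := by simp only [hp]; omega
  -- epsilon values
  have hεS : ε (Svec n) = -1 := wmap_S p
  have hεvv : ∀ t, ε (vvF t) = if p = t then 1 else 0 := fun t => wmap_vvF p t
  have hεC : ε (Cvec n) = 0 := by
    rw [hε, wmap_C, if_neg]
    simp only [Fin.ext_iff, lastI_val]
    omega
  have hεe : ε e = 1 := by rw [heq, hεvv, if_pos rfl]
  have hwhv : ∀ (t u : Fin n), (u : ℕ) < n - 1 → wmap n t (hvF u) = 0 := by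
    intro t u hu
    rw [wmap_hvF, if_neg, neg_zero]
    simp only [Fin.ext_iff, lastI_val]
    omega
  have hεhv : ∀ t : Fin n, (t : ℕ) < n - 1 → ε (hvF t) = 0 := fun t ht => hwhv p t ht
  have hwC : ∀ r, r ∈ S' → wmap n r (Cvec n) = 0 := by
    intro r hr
    rw [wmap_C, if_neg]
    rw [hS'] at hr
    simp only [Finset.mem_filter] at hr
    simp only [Fin.ext_iff, lastI_val]
    omega
  -- B facts
  have hBhv : ∀ t : Fin n, (t : ℕ) < n - 1 → B (hvF t) = 0 := fun t ht => by
    rw [← evec_succ_hvF t ht]; exact hBann _ (by omega) (by omega)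
  have hBen : B (evec n n) = 0 := hBann n (by omega) (by omega)
  have hBvvlow : ∀ t : Fin n, (t : ℕ) < k - n - 1 → B (vvF t) = 0 := by
    intro t ht
    rw [← evec_vvF t hn]
    exact hBann _ (by omega) (by omega)
  have hBSvv : ∀ i, B (Svec n) (vvF i) = 0 := fun i => by
    rw [← Jmap_hvF, hBsp]; exact hBC _
  have hBexp : ∀ X, B (evec n n) X = B (Svec n) X + ∑ t : Fin n, B (vvF t) X := by
    intro X
    rw [evec_nn, hb1]
    congr 1
    exact apply_sum (f := fun Z => B Z X) (fun a b => hb1 a b X) (h0 X) _ _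
  have hBSS : B (Svec n) (Svec n) = 0 := by
    have h1 : B (evec n n) (Svec n) = 0 := congrFun hBen _
    rw [hBexp] at h1
    have h2 : (∑ t : Fin n, B (vvF t) (Svec n)) = 0 := by
      refine Finset.sum_eq_zero fun t _ => ?_
      rw [hBs]; exact hBSvv t
    rw [h2] at h1
    linarith
  have hBS : ∀ X, B (Svec n) X = 0 := by
    intro X
    refine vanish_of_basis (f := fun Y => B (Svec n) Y) (fun a b => hb3 _ a b)
      (fun c a => hb4 c _ a) (fun t => ?_) (fun t => hBSvv t) X
    show B (Svec n) (hvF t) = 0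
    rcases Nat.lt_or_ge (t : ℕ) (n - 1) with ht | ht
    · rw [hBs]; exact congrFun (hBhv t ht) _
    · have ht' : t = lastI n := by simp only [Fin.ext_iff, lastI_val]; omega
      rw [ht', ← Svec_eq]; exact hBSS
  have hBXS : ∀ X, B X (Svec n) = 0 := fun X => by rw [hBs]; exact hBS X
  have hrow : ∀ i, (∑ t : Fin n, B (vvF t) (vvF i)) = 0 := by
    intro i
    have h1 : B (evec n n) (vvF i) = 0 := congrFun hBen _
    rw [hBexp, hBSvv, zero_add] at h1
    exact h1
  have hMzero : ∀ i : Fin n, i ∉ S' → i ≠ p → ∀ x, B (vvF i) x = 0 := by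
    intro i hi hip x
    rw [hS'] at hi
    simp only [Finset.mem_filter, Finset.mem_univ, true_and, not_and, not_lt] at hi
    rcases Nat.lt_or_ge (i : ℕ) (p : ℕ) with h | h
    · exact congrFun (hBvvlow i (by simp only [hp] at h ⊢; omega)) x
    · have h2 : (p : ℕ) < (i : ℕ) := by
        rcases Nat.lt_or_ge (p : ℕ) (i : ℕ) with h' | h'
        · exact h'
        · exact absurd (Fin.ext (by omega)) hip
      have h3 : (i : ℕ) = n - 1 := by have := i.isLt; have := hi h2; omega
      have h4 : i = lastI n := by simp only [Fin.ext_iff, lastI_val]; omega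
      rw [h4, ← Cvec_eq, hBs]
      exact hBC x
  have hMzero' : ∀ i : Fin n, i ∉ S' → i ≠ p → ∀ x, B x (vvF i) = 0 := by
    intro i hi hip x
    rw [hBs]
    exact hMzero i hi hip x
  have hrowS' : ∀ i, (∑ t ∈ S', B (vvF t) (vvF i)) = -B (vvF p) (vvF i) := by
    intro i
    have h1 := hrow i
    rw [← Finset.sum_filter_add_sum_filter_not Finset.univ
      (fun t : Fin n => (p : ℕ) < (t : ℕ) ∧ (t : ℕ) < n - 1)
      (fun t => B (vvF t) (vvF i))] at h1
    have h2 : (∑ t ∈ Finset.univ.filter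
        (fun t : Fin n => ¬((p : ℕ) < (t : ℕ) ∧ (t : ℕ) < n - 1)),
        B (vvF t) (vvF i)) = B (vvF p) (vvF i) := by
      refine Finset.sum_eq_single_of_mem p ?_ ?_
      · simp only [Finset.mem_filter, Finset.mem_univ, true_and]
        omega
      · intro t ht htp
        simp only [Finset.mem_filter, Finset.mem_univ, true_and] at ht
        refine hMzero t ?_ htp _
        rw [hS']
        simp only [Finset.mem_filter, Finset.mem_univ, true_and]
        exact ht
    rw [h2, ← hS'] at h1
    linarith
  -- contraction
  have hctr : ∀ (i : Fin n), i ∈ S' → ∀ t',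
      (∑ u ∈ S', U t' u i) = -B (vvF t') (vvF i) :=
    fun i hi t' => gad_contract hMs (Finset.card_ne_zero_of_mem hi) t' i
  -- membership in g3P1
  have hTA : IsTrilin n A :=
    (sym3_trilin hεadd hεsmul ⟨hb1, hb2, hb3, hb4⟩).add
      (triProd_trilin wmap_add wmap_smul)
  have h12A : ∀ X Y Z, A X Y Z = A Y X Z := by
    intro X Y Z
    show sym3 ε e B X Y Z + triProd U S' (wmap n) X Y Z = _
    rw [sym3_symm12 hBs, triProd_symm12 (fun t u r => gad_symm12 hMs t u r)]
    rfl
  have h23A : ∀ X Y Z, A X Y Z = A X Z Y := by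
    intro X Y Z
    show sym3 ε e B X Y Z + triProd U S' (wmap n) X Y Z = _
    rw [sym3_symm23 hBs, triProd_symm23 (fun t u r => gad_symm23 hMs t u r)]
    rfl
  have hCA : ∀ X Y, A X Y (Cvec n) = 0 := by
    intro X Y
    show sym3 ε e B X Y (Cvec n) + triProd U S' (wmap n) X Y (Cvec n) = 0
    rw [sym3_zero₃ hεC hBC, triProd_zero₃ hwC]
    ring
  have hpnotS' : p ∉ S' := by
    rw [hS']
    simp only [Finset.mem_filter, Finset.mem_univ, true_and]
    omega
  have hmemS' : ∀ t : Fin n, t ∈ S' ↔ ((p : ℕ) < (t : ℕ) ∧ (t : ℕ) < n - 1) := by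
    intro t
    rw [hS']
    simp only [Finset.mem_filter, Finset.mem_univ, true_and]
  -- spray basis claims
  have claim_h : ∀ (t i : Fin n), A (hvF t) (Svec n) (vvF i) = 0 := by
    intro t i
    show sym3 ε e B (hvF t) (Svec n) (vvF i) +
      triProd U S' (wmap n) (hvF t) (Svec n) (vvF i) = 0
    rcases Nat.lt_or_ge (t : ℕ) (n - 1) with ht | ht
    · have h1 : ε (hvF t) = 0 := hεhv t ht
      have h2 : ∀ Y, B (hvF t) Y = 0 := fun Y => congrFun (hBhv t ht) Y
      have hBeb : B e (hvF t) = 0 := by rw [hBs]; exact h2 _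
      have h3 : triProd U S' (wmap n) (hvF t) (Svec n) (vvF i) = 0 :=
        triProd_zero₁ (fun u _ => hwhv u t ht) _ _
      rw [h3]
      simp only [sym3, h1, h2, hBeb]
      ring
    · have ht' : t = lastI n := by simp only [Fin.ext_iff, lastI_val]; omega
      rw [ht', ← Svec_eq, triProd_SS_vv]
      have hs3 : sym3 ε e B (Svec n) (Svec n) (vvF i) =
          -B (vvF p) (vvF i) + (if p = i then 1 else 0) * B (vvF p) (vvF p) := by
        simp only [sym3, hεS, hεvv, heq, hBS, hBXS]
        ring
      rw [hs3]
      by_cases hi : i ∈ S'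
      · rw [if_pos hi]
        have hsum2 : (∑ t' ∈ S', ∑ u ∈ S', U t' u i) =
            ∑ t' ∈ S', -B (vvF t') (vvF i) :=
          Finset.sum_congr rfl fun t' _ => hctr i hi t'
        have hpi : p ≠ i := by
          intro hcon
          exact hpnotS' (hcon ▸ hi)
        rw [hsum2, Finset.sum_neg_distrib, hrowS', if_neg hpi]
        ring
      · rw [if_neg hi]
        by_cases hpi : p = i
        · rw [if_pos hpi, ← hpi]
          ring
        · rw [if_neg hpi, hMzero' i hi (fun hc => hpi hc.symm) (vvF p)]
          ring
  have claim_v : ∀ (l i : Fin n), A (vvF l) (Svec n) (vvF i) = 0 := by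
    intro l i
    show sym3 ε e B (vvF l) (Svec n) (vvF i) +
      triProd U S' (wmap n) (vvF l) (Svec n) (vvF i) = 0
    have hs3 : sym3 ε e B (vvF l) (Svec n) (vvF i) =
        -B (vvF l) (vvF i) + (if p = l then 1 else 0) * B (vvF p) (vvF i)
          + (if p = i then 1 else 0) * B (vvF p) (vvF l)
          - (if p = l then 1 else 0) * (if p = i then 1 else 0) * B (vvF p) (vvF p) := by
      simp only [sym3, hεS, hεvv, heq, hBS, hBXS]
      ring
    rw [hs3, triProd_vv_S_vv]
    by_cases hi : i ∈ S'
    · have hpi : p ≠ i := fun hcon => hpnotS' (hcon ▸ hi)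
      rw [if_pos hi, if_neg hpi]
      by_cases hl : l ∈ S'
      · have hpl : p ≠ l := fun hcon => hpnotS' (hcon ▸ hl)
        rw [if_pos hl, hctr i hi l, if_neg hpl]
        ring
      · rw [if_neg hl]
        by_cases hpl : p = l
        · rw [if_pos hpl, ← hpl]
          ring
        · rw [if_neg hpl, hMzero l hl (fun hc => hpl hc.symm) (vvF i),
            hMzero' l hl (fun hc => hpl hc.symm) (vvF p)]
          ring
    · rw [if_neg hi]
      by_cases hpi : p = i
      · rw [if_pos hpi, ← hpi]
        by_cases hpl : p = l
        · rw [if_pos hpl, ← hpl]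
          ring
        · rw [if_neg hpl]
          linear_combination hBs (vvF p) (vvF l)
      · rw [if_neg hpi, hMzero' i hi (fun hc => hpi hc.symm) (vvF l),
          hMzero' i hi (fun hc => hpi hc.symm) (vvF p)]
        ring
  -- spray condition
  obtain ⟨t1, t2, t3, t4, t5, t6⟩ := hTA
  have hsprayA : ∀ X Y, A X (Svec n) (Jmap n Y) = A X Y (Cvec n) := by
    intro X Y
    rw [hCA X Y]
    have hstep3 : A X (Svec n) (Jmap n Y) = ∑ t : Fin n, (Jmap n Y).1 t *
        A X (Svec n) (hvF t) + ∑ t : Fin n, (Jmap n Y).2 t * A X (Svec n) (vvF t) :=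
      expand_fun (f := fun Z => A X (Svec n) Z) (fun a b => t5 X (Svec n) a b)
        (fun c a => t6 c X (Svec n) a) (Jmap n Y)
    rw [hstep3]
    have hz1 : (∑ t : Fin n, (Jmap n Y).1 t * A X (Svec n) (hvF t)) = 0 := by
      refine Finset.sum_eq_zero fun t _ => ?_
      show (0 : Fin n → ℝ) t * A X (Svec n) (hvF t) = 0
      simp
    have hz2 : (∑ t : Fin n, (Jmap n Y).2 t * A X (Svec n) (vvF t)) = 0 := by
      refine Finset.sum_eq_zero fun t _ => ?_
      have h00 : A X (Svec n) (vvF t) = 0 :=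
        vanish_of_basis (f := fun X => A X (Svec n) (vvF t)) (fun a b => t1 a b _ _)
          (fun c a => t2 c a _ _) (fun u => claim_h u t) (fun u => claim_v u t) X
      rw [h00, mul_zero]
    rw [hz1, hz2]
    ring
  have hmem3 : A ∈ g3P1 n := ⟨⟨t1, t2, t3, t4, t5, t6⟩, h12A, h23A, hCA, hsprayA⟩
  -- annihilation
  have hann : ∀ j, 1 ≤ j → j ≤ k - 1 → A (evec n j) = 0 := by
    intro j hj1 hj2
    funext Y Z
    show sym3 ε e B (evec n j) Y Z + triProd U S' (wmap n) (evec n j) Y Z = 0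
    have h2 : ∀ Y, B (evec n j) Y = 0 := fun Y => congrFun (hBann j hj1 hj2) Y
    have h3 : B e (evec n j) = 0 := by rw [hBs]; exact h2 _
    rcases Nat.lt_or_ge j n with hjn | hjn
    · have hej : evec n j = hvF ⟨j - 1, by omega⟩ := evec_lt hj1 (by omega) hn
      have h1 : ε (evec n j) = 0 := by
        rw [hej]; exact hεhv _ (by show j - 1 < n - 1; omega)
      have h4 : triProd U S' (wmap n) (evec n j) Y Z = 0 := by
        rw [hej]
        exact triProd_zero₁ (fun u _ => hwhv u _ (by show j - 1 < n - 1; omega)) _ _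
      rw [sym3_ann h1 h2 h3 Y Z, h4]
      ring
    · rcases Nat.lt_or_ge n j with hjn' | hjn'
      · -- n < j ≤ k - 1 : vertical
        have hej : evec n j = vvF ⟨j - n - 1, by omega⟩ := evec_gt hjn' (by omega)
        have h1 : ε (evec n j) = 0 := by
          rw [hej, hεvv, if_neg]
          simp only [Fin.ext_iff, hp]
          omega
        have h4 : triProd U S' (wmap n) (evec n j) Y Z = 0 := by
          rw [hej]
          refine triProd_zero₁ (fun u hu => ?_) _ _
          rw [wmap_vvF, if_neg]
          rw [hmemS'] at hu
          simp only [Fin.ext_iff]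
          show ¬ (u : ℕ) = j - n - 1
          simp only [hp] at hu
          omega
        rw [sym3_ann h1 h2 h3 Y Z, h4]
        ring
      · -- j = n
        have hjeq : j = n := by omega
        have h1 : ε (evec n j) = 0 := by rw [hjeq]; exact wmap_evec_nn p
        have h4 : triProd U S' (wmap n) (evec n j) Y Z = 0 := by
          rw [hjeq]
          exact triProd_zero₁ (fun u _ => wmap_evec_nn u) _ _
        rw [sym3_ann h1 h2 h3 Y Z, h4]
        ring
  refine Submodule.mem_map.mpr ⟨A, ⟨hmem3, hann⟩, ?_⟩
  show A (evec n k) = B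
  funext Y Z
  rw [he]
  show sym3 ε e B (vvF p) Y Z + triProd U S' (wmap n) (vvF p) Y Z = B Y Z
  have h4 : triProd U S' (wmap n) (vvF p) Y Z = 0 := by
    refine triProd_zero₁ (fun u hu => ?_) _ _
    rw [wmap_vvF, if_neg]
    intro hc
    exact hpnotS' (hc ▸ hu)
  have h5 : sym3 ε e B (vvF p) Y Z = B Y Z := sym3_eval hεe Y Z
  rw [h4, h5]
  ring


lemma map_GT_ge (hn : 1 ≤ n) (k : ℕ) (hk1 : 1 ≤ k) (hk2 : k ≤ 2 * n) :
    g2f n (k - 1) ≤ (GT n (k - 1)).map (phi n k) := by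
  intro B hB
  by_cases h1 : k ≤ n - 1
  · exact case_lt hn hk1 h1 hB
  · by_cases h2 : k = n
    · subst h2; exact case_n hn hB
    · by_cases h3 : k = 2 * n
      · subst h3; exact case_top hn hB
      · exact case_gt hn (by omega) (by omega) hB

end SP7

/-- the symbol of the Rapcsák operator `P₁` is involutive: the basis
`e_1, …, e_{2n}` is quasi-regular. -/
theorem symbolP1_involutive (n : ℕ) (hn : 1 ≤ n) :
    Module.finrank ℝ (g3P1 n) =
      Module.finrank ℝ (g2P1 n) +
        ∑ k ∈ Finset.Icc 1 (2 * n), Module.finrank ℝ (g2P1e n k) := by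
  haveI : NeZero n := ⟨by omega⟩
  have hstep : ∀ k, 1 ≤ k → k ≤ 2 * n →
      Module.finrank ℝ (SP7.GT n (k - 1)) =
        Module.finrank ℝ (SP7.g2f n (k - 1)) + Module.finrank ℝ (SP7.GT n k) :=
    fun k h1 h2 => SP7.step k h1
      (le_antisymm (SP7.map_GT_le k h1) (SP7.map_GT_ge hn k h1 h2))
  have tele : ∀ m, m ≤ 2 * n → Module.finrank ℝ (SP7.GT n (2 * n - m)) =
      ∑ k ∈ Finset.Icc (2 * n - m + 1) (2 * n), Module.finrank ℝ (SP7.g2f n (k - 1)) := by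
    intro m
    induction m with
    | zero =>
      intro _
      rw [Nat.sub_zero, SP7.GT_top_eq_bot hn, Finset.Icc_eq_empty (by omega),
        Finset.sum_empty, finrank_bot]
    | succ m ih =>
      intro hm
      have e1 : 2 * n - (m + 1) + 1 = 2 * n - m := by omega
      have h := hstep (2 * n - m) (by omega) (by omega)
      have e2 : 2 * n - m - 1 = 2 * n - (m + 1) := by omega
      rw [e2] at h
      rw [h, ih (by omega), e1]
      have hins : Finset.Icc (2 * n - m) (2 * n) =
          insert (2 * n - m) (Finset.Icc (2 * n - m + 1) (2 * n)) := by
        ext a; simp only [Finset.mem_Icc, Finset.mem_insert]; omega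
      rw [hins, Finset.sum_insert (by simp only [Finset.mem_Icc]; omega), e2]
  have main := tele (2 * n) le_rfl
  rw [Nat.sub_self, SP7.GT_zero, zero_add] at main
  rw [main]
  have hconv : ∀ k, Module.finrank ℝ (g2P1e n k) = Module.finrank ℝ (SP7.g2f n k) :=
    SP7.finrank_g2P1e_eq
  rw [SP7.g2P1_eq_g2P1e_zero, hconv 0]
  simp only [hconv]
  have hre : ∑ k ∈ Finset.Icc 1 (2 * n), Module.finrank ℝ (SP7.g2f n (k - 1)) =
      ∑ k ∈ Finset.Icc 0 (2 * n - 1), Module.finrank ℝ (SP7.g2f n k) := by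
    rw [show Finset.Icc 1 (2 * n) = (Finset.Icc 0 (2 * n - 1)).map
      ⟨fun x => x + 1, add_left_injective 1⟩ from ?_, Finset.sum_map]
    · simp
    · ext a
      simp only [Finset.mem_map, Finset.mem_Icc, Function.Embedding.coeFn_mk]
      constructor
      · intro h; exact ⟨a - 1, by omega, by show a - 1 + 1 = a; omega⟩
      · rintro ⟨b, hb, rfl⟩; exact ⟨by show 1 ≤ b + 1; omega, by show b + 1 ≤ 2 * n; omega⟩
  have h0 : Finset.Icc 0 (2 * n - 1) = insert 0 (Finset.Icc 1 (2 * n - 1)) := by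
    ext a; simp only [Finset.mem_Icc, Finset.mem_insert]; omega
  have h2n : Finset.Icc 1 (2 * n) = insert (2 * n) (Finset.Icc 1 (2 * n - 1)) := by
    ext a; simp only [Finset.mem_Icc, Finset.mem_insert]; omega
  rw [hre, h0, Finset.sum_insert (by simp only [Finset.mem_Icc]; omega),
    h2n, Finset.sum_insert (by simp only [Finset.mem_Icc]; omega),
    SP7.g2f_top_eq_bot hn, finrank_bot]
  omega
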